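/- arXiv:1401.6775 — 3 statements merged into one kernel-verified Lean document; each statement's English description precedes it below -/
import Mathlib

section
/- Suppose trajectories ŝᵢ*(j) satisfy ‖ŝᵢ*(j) - sᵢ*(j)‖ ≤ d_τ for all j (presumable vs. true planned trajectory mismatch), that vehicle i's chosen trajectory satisfies ‖sᵢ*(r) - s(r+1 | k-1)‖ > d_mut for all r (clearing the previously broadcast trajectory), and that the vehicle at hand chose s*(· | k) so that ‖s*(r|k) - ŝᵢ*(r|k)‖ > d_mut + d_τ for all r and all presumable trajectories surviving the refinement ‖ŝᵢ*(r) - s(r+1|k-1)‖ > d_mut - d_τ. Then ‖s*(r|k) - sᵢ*(r|k)‖ ≥ d_mut for all r. -/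
/-- Mutual feasibility is preserved by the decentralized refinement rules.
`sprev r` denotes the previously broadcast probational trajectory
`s(r | k-1)` of the vehicle at hand; `strue` is the true planned trajectory
`sᵢ*(· | k)` of vehicle `i`; `shat` is the presumable planned trajectory
`ŝᵢ*(· | k)` computed by the vehicle at hand, with uniform error `d_τ`;
`schosen` is the trajectory `s*(· | k)` chosen by the vehicle at hand. -/
theorem refinement_preserves_mutual_feasibility
    (d_mut d_tau : ℝ)
    (sprev strue shat schosen : ℕ → EuclideanSpace ℝ (Fin 2))
    (hmismatch : ∀ j : ℕ, ‖shat j - strue j‖ ≤ d_tau)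
    (hclear : ∀ r : ℕ, d_mut < ‖strue r - sprev (r + 1)‖)
    (hrefine : (∀ r : ℕ, d_mut - d_tau < ‖shat r - sprev (r + 1)‖) →
      ∀ r : ℕ, d_mut + d_tau < ‖schosen r - shat r‖) :
    ∀ r : ℕ, d_mut ≤ ‖schosen r - strue r‖ := by
  intro r
  have hsurv : ∀ r : ℕ, d_mut - d_tau < ‖shat r - sprev (r + 1)‖ := by
    intro r
    have h1 := hclear r
    have h2 := hmismatch r
    have h3 : ‖strue r - sprev (r + 1)‖ ≤ ‖strue r - shat r‖ + ‖shat r - sprev (r + 1)‖ :=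
      norm_sub_le_norm_sub_add_norm_sub _ _ _
    rw [norm_sub_rev] at h2
    linarith
  have h4 := hrefine hsurv r
  have h5 := hmismatch r
  have h6 : ‖schosen r - shat r‖ ≤ ‖schosen r - strue r‖ + ‖strue r - shat r‖ :=
    norm_sub_le_norm_sub_add_norm_sub _ _ _
  rw [norm_sub_rev] at h5
  linarith
end

section
/- Consider the scalar sliding-mode system η̇_Δ = v_Δ + w_η(t), v̇_Δ = -u_exc · sgn(k₀η_Δ + k₁v_Δ) + w_v(t), with |w_η(t)| ≤ w̄_η, |w_v(t)| ≤ w̄_v, |v_Δ| ≤ 2v_max, k₀, k₁ > 0, u_exc > w̄_v, and u_exc - w̄_v > (k₀/k₁)(2v_max + w̄_η). If initially η_Δ(0) = 0 and v_Δ(0) = 0, then the surface S := k₀η_Δ + k₁v_Δ = 0 is sliding (S(t) = 0 for all t ≥ 0) and |η_Δ(t)| ≤ k₁w̄_η/k₀ for all t ≥ 0. -/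
/-- Barrier lemma: if `f 0 ≤ c`, `f` is continuous on `[0, t₁]`, and `f` has a
negative derivative at every interior point where `f > c`, then `f t₁ ≤ c`. -/
lemma aux_barrier_le (f : ℝ → ℝ) (c t₁ : ℝ) (ht₁ : 0 ≤ t₁)
    (hf0 : f 0 ≤ c)
    (hcont : ∀ t ∈ Set.Icc (0:ℝ) t₁, ContinuousAt f t)
    (hderiv : ∀ t, 0 < t → t < t₁ → c < f t → ∃ d, HasDerivAt f d t ∧ d < 0) :
    f t₁ ≤ c := by
  by_contra h
  push_neg at h
  rcases ht₁.eq_or_lt with h0 | ht₁pos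
  · rw [← h0] at h; exact absurd hf0 (not_le.mpr h)
  have hcontOn : ContinuousOn f (Set.Icc 0 t₁) :=
    fun t ht => (hcont t ht).continuousWithinAt
  set A : Set ℝ := Set.Icc 0 t₁ ∩ f ⁻¹' Set.Iic c with hA
  have hA_ne : A.Nonempty := ⟨0, ⟨le_refl 0, ht₁⟩, hf0⟩
  have hA_closed : IsClosed A :=
    hcontOn.preimage_isClosed_of_isClosed isClosed_Icc isClosed_Iic
  have hA_comp' : IsCompact A :=
    isCompact_Icc.of_isClosed_subset hA_closed Set.inter_subset_left
  set t₀ : ℝ := sSup A with ht₀def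
  have ht₀A : t₀ ∈ A := hA_comp'.sSup_mem hA_ne
  obtain ⟨⟨ht₀0, ht₀t₁⟩, ht₀c⟩ := ht₀A
  have ht₀lt : t₀ < t₁ := by
    rcases ht₀t₁.eq_or_lt with h' | h'
    · exact absurd (h' ▸ ht₀c) (not_le.mpr h)
    · exact h'
  have hgt : ∀ t, t₀ < t → t ≤ t₁ → c < f t := by
    intro t ht ht'
    by_contra hle
    push_neg at hle
    have : t ∈ A := ⟨⟨le_trans ht₀0 ht.le, ht'⟩, hle⟩
    exact absurd (le_csSup hA_comp'.bddAbove this) (not_le.mpr ht)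
  have hanti : StrictAntiOn f (Set.Icc t₀ t₁) := by
    apply strictAntiOn_of_deriv_neg (convex_Icc _ _)
    · exact hcontOn.mono (Set.Icc_subset_Icc ht₀0 le_rfl)
    · intro x hx
      rw [interior_Icc] at hx
      obtain ⟨d, hd, hdneg⟩ := hderiv x (lt_of_le_of_lt ht₀0 hx.1) hx.2
        (hgt x hx.1 hx.2.le)
      rwa [hd.deriv]
  have := hanti (Set.left_mem_Icc.mpr ht₀lt.le) (Set.right_mem_Icc.mpr ht₀lt.le) ht₀lt
  exact absurd h (not_lt.mpr (le_trans this.le ht₀c))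

/-- Sliding-mode longitudinal tracking: the surface `S = k₀η_Δ + k₁v_Δ = 0` is
sliding and the longitudinal error stays bounded by `k₁ w̄_η / k₀`. -/
theorem sliding_mode_longitudinal_tracking
    (k₀ k₁ u_exc v_max Wη Wv : ℝ)
    (hk₀ : 0 < k₀) (hk₁ : 0 < k₁)
    (huW : Wv < u_exc)
    (hgain : (k₀ / k₁) * (2 * v_max + Wη) < u_exc - Wv)
    (η v wη wv : ℝ → ℝ)
    (hwη : ∀ t, 0 ≤ t → |wη t| ≤ Wη)
    (hwv : ∀ t, 0 ≤ t → |wv t| ≤ Wv)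
    (hvbound : ∀ t, 0 ≤ t → |v t| ≤ 2 * v_max)
    (hη : ∀ t, 0 ≤ t → HasDerivAt η (v t + wη t) t)
    (hv : ∀ t, 0 ≤ t →
      HasDerivAt v (-u_exc * Real.sign (k₀ * η t + k₁ * v t) + wv t) t)
    (hη0 : η 0 = 0) (hv0 : v 0 = 0) :
    ∀ t, 0 ≤ t → k₀ * η t + k₁ * v t = 0 ∧ |η t| ≤ k₁ * Wη / k₀ := by
  have hWη : 0 ≤ Wη := le_trans (abs_nonneg _) (hwη 0 le_rfl)
  have hgain' : k₀ * (2 * v_max + Wη) < k₁ * (u_exc - Wv) := by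
    rw [div_mul_eq_mul_div, div_lt_iff₀ hk₁] at hgain
    linarith [hgain]
  -- derivative of S = k₀ η + k₁ v
  set S : ℝ → ℝ := fun t => k₀ * η t + k₁ * v t with hSdef
  have hS' : ∀ t, 0 ≤ t → HasDerivAt S
      (k₀ * (v t + wη t) + k₁ * (-u_exc * Real.sign (k₀ * η t + k₁ * v t) + wv t)) t :=
    fun t ht => ((hη t ht).const_mul k₀).add ((hv t ht).const_mul k₁)
  have hScont : ∀ t, 0 ≤ t → ContinuousAt S t :=
    fun t ht => (hS' t ht).continuousAt
  -- S stays zero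
  have hSzero : ∀ t, 0 ≤ t → S t = 0 := by
    intro t ht
    have hS0 : S 0 = 0 := by simp [hSdef, hη0, hv0]
    have hle : S t ≤ 0 := by
      apply aux_barrier_le S 0 t ht (le_of_eq hS0)
        (fun s hs => hScont s hs.1)
      intro s hs0 hst hSpos
      refine ⟨_, hS' s hs0.le, ?_⟩
      rw [show Real.sign (k₀ * η s + k₁ * v s) = 1 from Real.sign_of_pos hSpos]
      have h1 := (abs_le.mp (hvbound s hs0.le)).2
      have h2 := (abs_le.mp (hwη s hs0.le)).2
      have h3 := (abs_le.mp (hwv s hs0.le)).2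
      nlinarith [hgain', hk₀.le, hk₁.le]
    have hge : -S t ≤ 0 := by
      apply aux_barrier_le (fun t => -S t) 0 t ht (by simp [hS0])
        (fun s hs => (hScont s hs.1).neg)
      intro s hs0 hst hSneg
      have hSneg' : S s < 0 := by linarith [hSneg]
      refine ⟨-(k₀ * (v s + wη s) + k₁ * (-u_exc * Real.sign (k₀ * η s + k₁ * v s) + wv s)),
        (hS' s hs0.le).neg, ?_⟩
      rw [show Real.sign (k₀ * η s + k₁ * v s) = -1 from Real.sign_of_neg hSneg']
      have h1 := (abs_le.mp (hvbound s hs0.le)).1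
      have h2 := (abs_le.mp (hwη s hs0.le)).1
      have h3 := (abs_le.mp (hwv s hs0.le)).1
      nlinarith [hgain', hk₀.le, hk₁.le]
    linarith
  -- hence v = -(k₀/k₁) η on [0,∞)
  have hveq : ∀ t, 0 ≤ t → v t = -(k₀ / k₁) * η t := by
    intro t ht
    have h0 : k₀ * η t + k₁ * v t = 0 := hSzero t ht
    field_simp
    linarith
  -- derivative of η on [0,∞)
  have hη' : ∀ t, 0 ≤ t → HasDerivAt η (-(k₀ / k₁) * η t + wη t) t := by
    intro t ht
    have := hη t ht
    rwa [hveq t ht] at this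
  have hηcont : ∀ t, 0 ≤ t → ContinuousAt η t := fun t ht => (hη t ht).continuousAt
  set B : ℝ := k₁ * Wη / k₀ with hBdef
  have hB : 0 ≤ B := by positivity
  have hkey : ∀ s, 0 < s → B < η s → -(k₀ / k₁) * η s + wη s < 0 := by
    intro s hs0 hηs
    have h2 := (abs_le.mp (hwη s hs0.le)).2
    have hkk : 0 < k₀ / k₁ := div_pos hk₀ hk₁
    have : (k₀ / k₁) * B < (k₀ / k₁) * η s := by
      exact (mul_lt_mul_iff_right₀ hkk).mpr hηs
    have hBval : (k₀ / k₁) * B = Wη := by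
      rw [hBdef]; field_simp
    linarith
  intro t ht
  refine ⟨hSzero t ht, abs_le.mpr ⟨?_, ?_⟩⟩
  · -- lower bound: -B ≤ η t, i.e. -η t ≤ B
    have : -η t ≤ B := by
      apply aux_barrier_le (fun t => -η t) B t ht (by simp [hη0, hB])
        (fun s hs => (hηcont s hs.1).neg)
      intro s hs0 hst hpos
      refine ⟨-(-(k₀ / k₁) * η s + wη s), (hη' s hs0.le).neg, ?_⟩
      have hηs : η s < -B := by linarith [hpos]
      have h1 := (abs_le.mp (hwη s hs0.le)).1
      have hkk : 0 < k₀ / k₁ := div_pos hk₀ hk₁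
      have hBval : (k₀ / k₁) * B = Wη := by
        rw [hBdef]; field_simp
      nlinarith [hkk]
    linarith
  · apply aux_barrier_le η B t ht (by simp [hη0, hB])
      (fun s hs => hηcont s hs.1)
    intro s hs0 hst hpos
    exact ⟨_, hη' s hs0.le, hkey s hs0 hpos⟩
end

section
/- In the boundary-following navigation law, if ‖R_n‖ > ‖C_end(k)‖ then the target point A(k) satisfies ‖A(k)‖ ≥ ‖C_end(k)‖ cos Δφ ≥ d_tar·cos Δφ, and if moreover ‖C_end(k)‖ > 2 d_tar and ‖R_n‖ ≤ ‖C_end(k)‖ (so A(k) = C_end(k)), then ‖A(k)‖ > d_tar. In both cases ‖A(k)‖ is bounded below away from zero. -/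
/-- Lower bound on the distance to the target point `A(k)`: if the adjacent
detection `R_n` is farther than `C_end(k)` then
`‖A‖ ≥ ‖C‖ cos Δφ ≥ d_tar cos Δφ`; if instead `‖R_n‖ ≤ ‖C‖` (so `A = C`)
and `‖C‖ > 2 d_tar`, then `‖A‖ > d_tar`. -/
theorem target_point_distance_lower_bound
    (d_tar Δφ : ℝ) (hdtar : 0 < d_tar) (hcos : 0 ≤ Real.cos Δφ)
    (C Rn A : EuclideanSpace ℝ (Fin 2))
    (hC : d_tar ≤ ‖C‖)
    (hAfar : ‖Rn‖ > ‖C‖ →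
      ‖A‖ = ‖C‖ * Real.cos Δφ +
        Real.sqrt (d_tar ^ 2 - (‖C‖ * Real.sin Δφ) ^ 2))
    (hAnear : ‖Rn‖ ≤ ‖C‖ → A = C) :
    (‖Rn‖ > ‖C‖ →
      ‖C‖ * Real.cos Δφ ≤ ‖A‖ ∧ d_tar * Real.cos Δφ ≤ ‖C‖ * Real.cos Δφ) ∧
    (‖C‖ > 2 * d_tar → ‖Rn‖ ≤ ‖C‖ → d_tar < ‖A‖) := by
  constructor
  · intro h
    refine ⟨?_, by nlinarith⟩
    rw [hAfar h]
    nlinarith [Real.sqrt_nonneg (d_tar ^ 2 - (‖C‖ * Real.sin Δφ) ^ 2)]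
  · intro h2 hle
    rw [hAnear hle]
    nlinarith
end
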